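/- Let A be an n×n Z-matrix. If there exists a nonzero nonnegative vector x such that Ax > 0 componentwise, then A is a P-matrix (all principal minors positive). -/

import Mathlib

open Matrix

/-- A Z-matrix: all off-diagonal entries are nonpositive. -/
def IsZMatrix {ι : Type*} [Fintype ι] [DecidableEq ι] (A : Matrix ι ι ℝ) : Prop :=
  ∀ i j, i ≠ j → A i j ≤ 0

/-- A hidden Z-matrix: AX = Y for Z-matrices X, Y, with rᵀX + sᵀY > 0 for some r, s ≥ 0. -/
def IsHiddenZ {ι : Type*} [Fintype ι] [DecidableEq ι] (A : Matrix ι ι ℝ) : Prop :=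
  ∃ X Y : Matrix ι ι ℝ, ∃ r s : ι → ℝ,
    IsZMatrix X ∧ IsZMatrix Y ∧ A * X = Y ∧
    (∀ i, 0 ≤ r i) ∧ (∀ i, 0 ≤ s i) ∧
    (∀ j, 0 < (Matrix.vecMul r X + Matrix.vecMul s Y) j)

/-- The principal minor of `A` indexed by `α`. -/
def principalMinor {ι : Type*} [Fintype ι] [DecidableEq ι] (A : Matrix ι ι ℝ)
    (α : Finset ι) : ℝ :=
  (A.submatrix (fun i : {x // x ∈ α} => (i : ι)) (fun j : {x // x ∈ α} => (j : ι))).det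


lemma key_det_pos : ∀ (m : ℕ) (A : Matrix (Fin m) (Fin m) ℝ),
    (∀ i j, i ≠ j → A i j ≤ 0) → ∀ x : Fin m → ℝ, (∀ i, 0 ≤ x i) →
    (∀ i, 0 < A.mulVec x i) → 0 < A.det := by
  intro m
  induction m with
  | zero => intro A _ x _ _; simp [Matrix.det_fin_zero]
  | succ n ih =>
    intro A hA x hx hAx
    have hmv : ∀ i, A.mulVec x i = ∑ j, A i j * x j := by
      intro i; simp [Matrix.mulVec, dotProduct]
    have hbound : ∀ i, A.mulVec x i ≤ A i i * x i := by
      intro i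
      rw [hmv i, ← Finset.sum_erase_add _ _ (Finset.mem_univ i)]
      have h0 : ∑ j ∈ Finset.univ.erase i, A i j * x j ≤ 0 :=
        Finset.sum_nonpos fun j hj =>
          mul_nonpos_iff.mpr (Or.inr ⟨hA i j (Finset.ne_of_mem_erase hj).symm, hx j⟩)
      linarith
    have hdiagx : ∀ i, 0 < A i i * x i := fun i => lt_of_lt_of_le (hAx i) (hbound i)
    have hxpos : ∀ i, 0 < x i := by
      intro i
      rcases (hx i).lt_or_eq with h | h
      · exact h
      · exfalso; have := hdiagx i; rw [← h, mul_zero] at this; exact lt_irrefl 0 this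
    have hdiag : ∀ i, 0 < A i i := by
      intro i
      rcases mul_pos_iff.mp (hdiagx i) with ⟨h, _⟩ | ⟨_, h2⟩
      · exact h
      · exact absurd (hxpos i) (not_lt.mpr h2.le)
    set e : Fin n ⊕ Fin 1 ≃ Fin (n + 1) := finSumFinEquiv with he
    set p : Fin (n + 1) := e (Sum.inr 0) with hp
    set a : ℝ := A p p with ha
    have hapos : 0 < a := hdiag p
    have hane : a ≠ 0 := ne_of_gt hapos
    set M : Matrix (Fin n ⊕ Fin 1) (Fin n ⊕ Fin 1) ℝ := A.submatrix e e with hM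
    -- Invertible bottom-right block
    have hD : ∀ i j : Fin 1, M.toBlocks₂₂ i j = a := by
      intro i j
      have : i = 0 := Subsingleton.elim i 0
      have hj : j = 0 := Subsingleton.elim j 0
      subst this; subst hj
      simp [Matrix.toBlocks₂₂, hM, Matrix.submatrix_apply]
      rfl
    have hmulD : M.toBlocks₂₂ * Matrix.of (fun _ _ : Fin 1 => a⁻¹) = 1 := by
      ext i j
      have : i = 0 := Subsingleton.elim i 0
      have hj : j = 0 := Subsingleton.elim j 0
      subst this; subst hj
      simp [Matrix.mul_apply, Fin.sum_univ_one, hD, mul_inv_cancel₀ hane, Matrix.one_apply]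
    have hmulD' : Matrix.of (fun _ _ : Fin 1 => a⁻¹) * M.toBlocks₂₂ = 1 := by
      ext i j
      have : i = 0 := Subsingleton.elim i 0
      have hj : j = 0 := Subsingleton.elim j 0
      subst this; subst hj
      simp [Matrix.mul_apply, Fin.sum_univ_one, hD, inv_mul_cancel₀ hane, Matrix.one_apply]
    haveI : Invertible (M.toBlocks₂₂) := ⟨Matrix.of (fun _ _ : Fin 1 => a⁻¹), hmulD', hmulD⟩
    have hinvOf : ⅟(M.toBlocks₂₂) = Matrix.of (fun _ _ : Fin 1 => a⁻¹) :=
      invOf_eq_right_inv hmulD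
    have hdetM : M.det = A.det := Matrix.det_submatrix_equiv_self e A
    have hblocks : M = Matrix.fromBlocks M.toBlocks₁₁ M.toBlocks₁₂ M.toBlocks₂₁ M.toBlocks₂₂ :=
      (Matrix.fromBlocks_toBlocks M).symm
    have hdet2 : M.det = (M.toBlocks₂₂).det *
        (M.toBlocks₁₁ - M.toBlocks₁₂ * ⅟(M.toBlocks₂₂) * M.toBlocks₂₁).det := by
      conv_lhs => rw [hblocks]
      exact Matrix.det_fromBlocks₂₂ _ _ _ _
    set S : Matrix (Fin n) (Fin n) ℝ :=
      M.toBlocks₁₁ - M.toBlocks₁₂ * ⅟(M.toBlocks₂₂) * M.toBlocks₂₁ with hS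
    have hSentry : ∀ i j, S i j =
        A (e (Sum.inl i)) (e (Sum.inl j)) - A (e (Sum.inl i)) p * a⁻¹ * A p (e (Sum.inl j)) := by
      intro i j
      simp [hS, hinvOf, Matrix.sub_apply, Matrix.mul_apply, Fin.sum_univ_one,
        Matrix.toBlocks₁₁, Matrix.toBlocks₁₂, Matrix.toBlocks₂₁, hM, Matrix.submatrix_apply]
      rfl
    have hinl_ne : ∀ i : Fin n, e (Sum.inl i) ≠ p := by
      intro i h
      exact Sum.inl_ne_inr (e.injective h)
    -- S is a Z-matrix
    have hSZ : ∀ i j, i ≠ j → S i j ≤ 0 := by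
      intro i j hij
      rw [hSentry]
      have h1 : A (e (Sum.inl i)) (e (Sum.inl j)) ≤ 0 :=
        hA _ _ (fun h => hij (Sum.inl.inj (e.injective h)))
      have h2 : A (e (Sum.inl i)) p ≤ 0 := hA _ _ (hinl_ne i)
      have h3 : A p (e (Sum.inl j)) ≤ 0 := by
        refine hA _ _ ?_
        exact fun h => hinl_ne j h.symm
      have : 0 < a⁻¹ := inv_pos.mpr hapos
      nlinarith [mul_nonneg (mul_nonneg (neg_nonneg.mpr h2) this.le) (neg_nonneg.mpr h3)]
    -- sum splitting
    have hsum : ∀ f : Fin (n + 1) → ℝ,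
        ∑ j, f j = (∑ j : Fin n, f (e (Sum.inl j))) + f p := by
      intro f
      rw [← Equiv.sum_comp e f, Fintype.sum_sum_type]
      simp [Fin.sum_univ_one]
      rfl
    set y : Fin n → ℝ := fun j => x (e (Sum.inl j)) with hy
    have hypos : ∀ j, 0 ≤ y j := fun j => hx _
    have hSy : ∀ i, 0 < S.mulVec y i := by
      intro i
      have hmvi : S.mulVec y i = ∑ j, S i j * y j := by
        simp [Matrix.mulVec, dotProduct]
      have expand : ∑ j, S i j * y j =
          (∑ j : Fin n, A (e (Sum.inl i)) (e (Sum.inl j)) * x (e (Sum.inl j)))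
          - A (e (Sum.inl i)) p * a⁻¹ *
            (∑ j : Fin n, A p (e (Sum.inl j)) * x (e (Sum.inl j))) := by
        rw [Finset.mul_sum, ← Finset.sum_sub_distrib]
        refine Finset.sum_congr rfl fun j _ => ?_
        rw [hSentry]; ring
      have hrow : ∀ i' : Fin (n + 1),
          ∑ j : Fin n, A i' (e (Sum.inl j)) * x (e (Sum.inl j))
            = A.mulVec x i' - A i' p * x p := by
        intro i'
        have := hsum (fun j => A i' j * x j)
        rw [hmv i'] at *
        linarith [this]
      rw [hmvi, expand, hrow, hrow]
      have h2 : A (e (Sum.inl i)) p ≤ 0 := hA _ _ (hinl_ne i)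
      have hu1 : 0 < A.mulVec x (e (Sum.inl i)) := hAx _
      have hup : 0 < A.mulVec x p := hAx _
      have hinv : 0 < a⁻¹ := inv_pos.mpr hapos
      have hia : a⁻¹ * a = 1 := inv_mul_cancel₀ hane
      have key : A.mulVec x (e (Sum.inl i)) - A (e (Sum.inl i)) p * x p -
          A (e (Sum.inl i)) p * a⁻¹ * (A.mulVec x p - a * x p)
          = A.mulVec x (e (Sum.inl i)) - A (e (Sum.inl i)) p * a⁻¹ * A.mulVec x p := by
        field_simp
        ring
      rw [key]
      nlinarith [mul_nonneg (mul_nonneg (neg_nonneg.mpr h2) hinv.le) hup.le]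
    have hSdet : 0 < S.det := ih S hSZ y hypos hSy
    have hDdet : (M.toBlocks₂₂).det = a := by
      rw [Matrix.det_fin_one, hD]
    calc (0:ℝ) < a * S.det := mul_pos hapos hSdet
      _ = M.det := by rw [hdet2, hDdet]
      _ = A.det := hdetM

theorem Z_value_pos_P {n : ℕ} (A : Matrix (Fin n) (Fin n) ℝ) (hA : IsZMatrix A)
    (x : Fin n → ℝ) (hx0 : x ≠ 0) (hx : ∀ i, 0 ≤ x i) (hAx : ∀ i, 0 < A.mulVec x i) :
    ∀ α : Finset (Fin n), 0 < principalMinor A α := by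
  intro α
  set κ := {t // t ∈ α} with hκ
  set B : Matrix κ κ ℝ := A.submatrix (fun i : κ => (i : Fin n)) (fun j : κ => (j : Fin n)) with hB
  set e : Fin α.card ≃ κ := α.equivFin.symm with he
  have hdet : principalMinor A α = (B.submatrix e e).det := by
    rw [principalMinor, Matrix.det_submatrix_equiv_self]
  rw [hdet]
  apply key_det_pos α.card (B.submatrix e e) ?_ (fun i => x (e i)) (fun i => hx _)
  · -- positivity of mulVec
    intro i
    have hmvi : (B.submatrix e e).mulVec (fun i => x (e i)) i
        = ∑ j : Fin α.card, A ((e i : Fin n)) ((e j : Fin n)) * x (e j) := by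
      simp [Matrix.mulVec, dotProduct, hB, Matrix.submatrix_apply]
    rw [hmvi]
    have hcomp : ∑ j : Fin α.card, A ((e i : Fin n)) ((e j : Fin n)) * x (e j)
        = ∑ t : κ, A ((e i : Fin n)) (t : Fin n) * x t :=
      Equiv.sum_comp e (fun t : κ => A ((e i : Fin n)) (t : Fin n) * x t)
    rw [hcomp]
    have hattach : ∑ t : κ, A ((e i : Fin n)) (t : Fin n) * x t
        = ∑ t ∈ α, A ((e i : Fin n)) t * x t := by
      exact Finset.sum_coe_sort α (fun t => A ((e i : Fin n)) t * x t)
    rw [hattach]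
    have hsub : α ⊆ Finset.univ := Finset.subset_univ α
    have hsplit := Finset.sum_sdiff (f := fun t => A ((e i : Fin n)) t * x t) hsub
    have hnonpos : ∑ t ∈ Finset.univ \ α, A ((e i : Fin n)) t * x t ≤ 0 := by
      refine Finset.sum_nonpos fun t ht => ?_
      have htα : t ∉ α := (Finset.mem_sdiff.mp ht).2
      have hne : (e i : Fin n) ≠ t := fun h => htα (h ▸ (e i).2)
      exact mul_nonpos_iff.mpr (Or.inr ⟨hA _ _ hne, hx t⟩)
    have hfull : ∑ t, A ((e i : Fin n)) t * x t = A.mulVec x (e i) := by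
      simp [Matrix.mulVec, dotProduct]
    have := hAx ((e i : Fin n))
    rw [← hfull] at this
    linarith [hsplit, hnonpos, this]
  · -- Z-matrix
    intro i j hij
    have hne : ((e i : κ) : Fin n) ≠ ((e j : κ) : Fin n) := by
      intro h
      exact hij (e.injective (Subtype.coe_injective h))
    exact hA _ _ hne
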